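/- Let (μ_n) be a sequence of sub-probability measures on ℝ^d. If there exists a continuous function V: ℝ^d → ℝ with V > 0 everywhere and V(x) → 0 as |x| → ∞ such that ∫∫ V(x−y) dμ_n(x) dμ_n(y) → 0, then for every r > 0, sup_{x ∈ ℝ^d} μ_n(B(x,r)) → 0 as n → ∞. -/

import Mathlib

open MeasureTheory Filter Topology Metric

/-- If for some strictly positive continuous V vanishing at infinity the energy
∫∫ V(x-y) dμ_n dμ_n tends to 0, then the concentration functions of μ_n tend to 0. -/
theorem stmt5 (d : ℕ) (μ : ℕ → Measure (EuclideanSpace ℝ (Fin d)))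
    (hμ : ∀ n, μ n Set.univ ≤ 1)
    (V : EuclideanSpace ℝ (Fin d) → ℝ) (hVc : Continuous V) (hVpos : ∀ x, 0 < V x)
    (hV0 : Tendsto V (cocompact (EuclideanSpace ℝ (Fin d))) (𝓝 0))
    (hint : Tendsto (fun n => ∫ x, ∫ y, V (x - y) ∂(μ n) ∂(μ n)) atTop (𝓝 0)) :
    ∀ r : ℝ, 0 < r →
      Tendsto (fun n => ⨆ x : EuclideanSpace ℝ (Fin d), μ n (ball x r)) atTop (𝓝 0) := by
  haveI hfin : ∀ n, IsFiniteMeasure (μ n) := fun n =>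
    ⟨lt_of_le_of_lt (hμ n) ENNReal.one_lt_top⟩
  -- a global bound C on V
  obtain ⟨K, hK, hKc⟩ := mem_cocompact.mp (hV0.eventually (Iio_mem_nhds one_pos))
  obtain ⟨C0, hC0⟩ := hK.exists_bound_of_continuousOn hVc.continuousOn
  set C : ℝ := max C0 1 with hCdef
  have hVC : ∀ x, V x ≤ C := by
    intro x
    by_cases hx : x ∈ K
    · exact le_max_of_le_left ((le_abs_self _).trans (hC0 x hx))
    · exact le_max_of_le_right (le_of_lt (hKc hx))
  -- measurability of the kernel
  have hFmeas : Measurable fun p : EuclideanSpace ℝ (Fin d) × EuclideanSpace ℝ (Fin d) =>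
      ENNReal.ofReal (V (p.1 - p.2)) :=
    (hVc.comp (continuous_fst.sub continuous_snd)).measurable.ennreal_ofReal
  have hGmeas : ∀ n, Measurable fun x => ∫⁻ y, ENNReal.ofReal (V (x - y)) ∂(μ n) := by
    intro n
    exact Measurable.lintegral_prod_right hFmeas
  -- pointwise bound on inner lintegral
  have hGle : ∀ n x, (∫⁻ y, ENNReal.ofReal (V (x - y)) ∂(μ n)) ≤ ENNReal.ofReal C := by
    intro n x
    calc ∫⁻ y, ENNReal.ofReal (V (x - y)) ∂(μ n)
        ≤ ∫⁻ _, ENNReal.ofReal C ∂(μ n) :=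
          lintegral_mono fun y => ENNReal.ofReal_le_ofReal (hVC _)
      _ = ENNReal.ofReal C * μ n Set.univ := lintegral_const _
      _ ≤ ENNReal.ofReal C * 1 := by gcongr; exact hμ n
      _ = ENNReal.ofReal C := mul_one _
  have hGne : ∀ n x, (∫⁻ y, ENNReal.ofReal (V (x - y)) ∂(μ n)) ≠ ⊤ :=
    fun n x => ne_top_of_le_ne_top ENNReal.ofReal_ne_top (hGle n x)
  set J : ℕ → ENNReal := fun n => ∫⁻ x, ∫⁻ y, ENNReal.ofReal (V (x - y)) ∂(μ n) ∂(μ n)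
    with hJdef
  have hJle : ∀ n, J n ≤ ENNReal.ofReal C := by
    intro n
    calc J n ≤ ∫⁻ _, ENNReal.ofReal C ∂(μ n) := lintegral_mono fun x => hGle n x
      _ = ENNReal.ofReal C * μ n Set.univ := lintegral_const _
      _ ≤ ENNReal.ofReal C * 1 := by gcongr; exact hμ n
      _ = ENNReal.ofReal C := mul_one _
  have hJne : ∀ n, J n ≠ ⊤ := fun n => ne_top_of_le_ne_top ENNReal.ofReal_ne_top (hJle n)
  -- Bochner integral equals toReal of the lintegral
  have hIJ : ∀ n, (∫ x, ∫ y, V (x - y) ∂(μ n) ∂(μ n)) = (J n).toReal := by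
    intro n
    have hinner : ∀ x, (∫ y, V (x - y) ∂(μ n))
        = (∫⁻ y, ENNReal.ofReal (V (x - y)) ∂(μ n)).toReal := by
      intro x
      exact integral_eq_lintegral_of_nonneg_ae
        (Eventually.of_forall fun y => (hVpos _).le)
        ((hVc.comp (continuous_const.sub continuous_id)).aestronglyMeasurable)
    calc (∫ x, ∫ y, V (x - y) ∂(μ n) ∂(μ n))
        = ∫ x, (∫⁻ y, ENNReal.ofReal (V (x - y)) ∂(μ n)).toReal ∂(μ n) := by
          simp_rw [hinner]
      _ = (∫⁻ x, ENNReal.ofReal ((∫⁻ y, ENNReal.ofReal (V (x - y)) ∂(μ n)).toReal) ∂(μ n)).toReal := by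
          exact integral_eq_lintegral_of_nonneg_ae
            (Eventually.of_forall fun x => ENNReal.toReal_nonneg)
            ((hGmeas n).ennreal_toReal.aestronglyMeasurable)
      _ = (J n).toReal := by
          congr 1
          exact lintegral_congr fun x => ENNReal.ofReal_toReal (hGne n x)
  intro r hr
  -- minimum of V on the closed ball of radius 2r
  obtain ⟨w0, hw0mem, hw0⟩ :=
    (isCompact_closedBall (0 : EuclideanSpace ℝ (Fin d)) (2 * r)).exists_isMinOn
      ⟨0, mem_closedBall_self (by positivity)⟩ hVc.continuousOn
  set c : ℝ := V w0 with hcdef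
  have hc : 0 < c := hVpos w0
  have hcK : ∀ w ∈ closedBall (0 : EuclideanSpace ℝ (Fin d)) (2 * r), c ≤ V w :=
    fun w hw => hw0 hw
  -- key inequality
  have hkey : ∀ n z, ENNReal.ofReal c * (μ n (ball z r) * μ n (ball z r)) ≤ J n := by
    intro n z
    have h1 : ∀ x ∈ ball z r,
        ENNReal.ofReal c * μ n (ball z r) ≤ ∫⁻ y, ENNReal.ofReal (V (x - y)) ∂(μ n) := by
      intro x hx
      calc ENNReal.ofReal c * μ n (ball z r)
          = ∫⁻ _ in ball z r, ENNReal.ofReal c ∂(μ n) := (setLIntegral_const _ _).symm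
        _ ≤ ∫⁻ y in ball z r, ENNReal.ofReal (V (x - y)) ∂(μ n) := by
            refine setLIntegral_mono
              ((hVc.comp (continuous_const.sub continuous_id)).measurable.ennreal_ofReal)
              fun y hy => ?_
            refine ENNReal.ofReal_le_ofReal (hcK _ ?_)
            have : dist x y < 2 * r := by
              calc dist x y ≤ dist x z + dist z y := dist_triangle x z y
                _ < r + r := by
                    have h1 := mem_ball.mp hx
                    have h2 := mem_ball.mp hy
                    rw [dist_comm z y] at *
                    linarith [mem_ball.mp hx, mem_ball.mp hy]
                _ = 2 * r := by ring
            simpa [mem_closedBall, dist_eq_norm, sub_zero] using this.le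
        _ ≤ ∫⁻ y, ENNReal.ofReal (V (x - y)) ∂(μ n) := setLIntegral_le_lintegral _ _
    calc ENNReal.ofReal c * (μ n (ball z r) * μ n (ball z r))
        = ∫⁻ _ in ball z r, ENNReal.ofReal c * μ n (ball z r) ∂(μ n) := by
          rw [setLIntegral_const]; ring
      _ ≤ ∫⁻ x in ball z r, (∫⁻ y, ENNReal.ofReal (V (x - y)) ∂(μ n)) ∂(μ n) :=
          setLIntegral_mono (hGmeas n) h1
      _ ≤ J n := setLIntegral_le_lintegral _ _
  -- the bound on the concentration function
  have hbound : ∀ n, (⨆ z : EuclideanSpace ℝ (Fin d), μ n (ball z r))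
      ≤ ENNReal.ofReal (Real.sqrt ((∫ x, ∫ y, V (x - y) ∂(μ n) ∂(μ n)) / c)) := by
    intro n
    refine iSup_le fun z => ?_
    have hm : μ n (ball z r) ≠ ⊤ := measure_ne_top (μ n) _
    have h2 : c * ((μ n (ball z r)).toReal * (μ n (ball z r)).toReal) ≤ (J n).toReal := by
      have h3 := ENNReal.toReal_mono (hJne n) (hkey n z)
      rwa [ENNReal.toReal_mul, ENNReal.toReal_mul, ENNReal.toReal_ofReal hc.le] at h3
    rw [hIJ n]
    rw [ENNReal.le_ofReal_iff_toReal_le hm (Real.sqrt_nonneg _)]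
    have hsq : (μ n (ball z r)).toReal ^ 2 ≤ (J n).toReal / c := by
      rw [le_div_iff₀ hc]; nlinarith [h2]
    calc (μ n (ball z r)).toReal
        = Real.sqrt ((μ n (ball z r)).toReal ^ 2) := (Real.sqrt_sq ENNReal.toReal_nonneg).symm
      _ ≤ Real.sqrt ((J n).toReal / c) := Real.sqrt_le_sqrt hsq
  have hub : Tendsto (fun n => ENNReal.ofReal
      (Real.sqrt ((∫ x, ∫ y, V (x - y) ∂(μ n) ∂(μ n)) / c))) atTop (𝓝 0) := by
    have h1 : Tendsto (fun n => Real.sqrt ((∫ x, ∫ y, V (x - y) ∂(μ n) ∂(μ n)) / c))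
        atTop (𝓝 0) := by
      have := (Real.continuous_sqrt.tendsto (0 / c)).comp (hint.div_const c)
      simpa [Function.comp_def] using this
    have := (ENNReal.continuous_ofReal.tendsto 0).comp h1
    simpa [Function.comp_def] using this
  exact tendsto_of_tendsto_of_tendsto_of_le_of_le tendsto_const_nhds hub
    (fun n => zero_le) hbound
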